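/- Let c₁, c₂ ∈ ℝ with c₁c₂ ≠ 0 and c₃ = 0. The lattice equation with polynomial E(w,x,y,z) = wy + c₁wx + c₂(wz + xy), i.e. u_{n,m}u_{n,m+1} + c₁u_{n,m}u_{n+1,m} + c₂(u_{n,m}u_{n+1,m+1} + u_{n+1,m}u_{n,m+1}) = 0, admits the five-point generalized symmetry with generator g_{n,m} = (u_{n,m+1} + u_{n,m}·c₁/c₂)(u_{n,m}/u_{n,m-1} + c₁/c₂): for every solution u : ℤ × ℤ → ℝ of the equation satisfying u_{n,m} ≠ 0 for all (n,m), and every (n,m) ∈ ℤ², the linearized equation g_{n,m}·∂₁E + g_{n+1,m}·∂₂E + g_{n,m+1}·∂₃E + g_{n+1,m+1}·∂₄E = 0 holds, where each ∂ᵢE is evaluated at (u_{n,m}, u_{n+1,m}, u_{n,m+1}, u_{n+1,m+1}). -/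

import Mathlib

set_option maxHeartbeats 1000000 in
lemma key_alg (c1 c2 a b w x y z p q : ℝ) (hc2 : c2 ≠ 0) (ha : a ≠ 0) (hb : b ≠ 0)
    (hw : w ≠ 0) (hx : x ≠ 0) (hy : y ≠ 0)
    (h1 : a*w + c1*(a*b) + c2*(a*x + b*w) = 0)
    (h2 : w*y + c1*(w*x) + c2*(w*z + x*y) = 0)
    (h3 : y*p + c1*(y*z) + c2*(y*q + z*p) = 0) :
    (y + w*(c1/c2))*(w/a + c1/c2)*(y + c1*x + c2*z)
    + (z + x*(c1/c2))*(x/b + c1/c2)*(c1*w + c2*y)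
    + (p + y*(c1/c2))*(y/w + c1/c2)*(w + c2*x)
    + (q + z*(c1/c2))*(z/x + c1/c2)*(c2*w) = 0 := by
  field_simp
  refine mul_left_cancel₀ (mul_ne_zero hy (pow_ne_zero 6 hc2)) ?_
  linear_combination
    (-(c2^8*x^2*y^3) - c1*c2^7*w*x^2*y^2) * h1
    + (c2^8*b*w*x*y^2 + c2^8*a*x^2*y^2 + c2^8*a*b*x*y*p - c2^8*a*b*w*z*p
       + c1*c2^7*b*w^2*x*y + c1*c2^7*a*w*x^2*y + 2*c1*c2^7*a*b*x*y^2
       + 2*c1^2*c2^6*a*b*w*x*y) * h2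
    + (c2^8*a*b*w^2*z + c1*c2^7*a*b*w^2*x) * h3

theorem stmt_13
    (c₁ c₂ : ℝ) (h : c₁ * c₂ ≠ 0)
    (E : ℝ → ℝ → ℝ → ℝ → ℝ)
    (hE : ∀ w x y z : ℝ, E w x y z = w * y + c₁ * (w * x) + c₂ * (w * z + x * y))
    (u : ℤ × ℤ → ℝ)
    (hu : ∀ n m : ℤ, E (u (n, m)) (u (n + 1, m)) (u (n, m + 1)) (u (n + 1, m + 1)) = 0)
    (hne : ∀ n m : ℤ, u (n, m) ≠ 0)
    (g : ℤ × ℤ → ℝ)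
    (hg : ∀ n m : ℤ, g (n, m) = (u (n, m + 1) + u (n, m) * (c₁ / c₂)) * (u (n, m) / u (n, m - 1) + c₁ / c₂))
    (n m : ℤ) :
    g (n, m) * deriv (fun w => E w (u (n + 1, m)) (u (n, m + 1)) (u (n + 1, m + 1))) (u (n, m))
      + g (n + 1, m) * deriv (fun x => E (u (n, m)) x (u (n, m + 1)) (u (n + 1, m + 1))) (u (n + 1, m))
      + g (n, m + 1) * deriv (fun y => E (u (n, m)) (u (n + 1, m)) y (u (n + 1, m + 1))) (u (n, m + 1))
      + g (n + 1, m + 1) * deriv (fun z => E (u (n, m)) (u (n + 1, m)) (u (n, m + 1)) z) (u (n + 1, m + 1)) = 0 := by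
  have hc2 : c₂ ≠ 0 := fun hc => h (by rw [hc, mul_zero])
  set_option linter.unnecessarySimpa false in
  have dlin : ∀ k c v : ℝ, deriv (fun t => t * k + c) v = k := fun k c v => by
    have := (((hasDerivAt_id v).mul_const k).add_const c).deriv
    simpa using this
  set A := u (n, m - 1) with hA
  set B := u (n + 1, m - 1) with hB
  set W := u (n, m) with hW
  set X := u (n + 1, m) with hX
  set Y := u (n, m + 1) with hY
  set Z := u (n + 1, m + 1) with hZ
  set P := u (n, m + 2) with hP
  set Q := u (n + 1, m + 2) with hQ
  have d1 : deriv (fun w => E w X Y Z) W = Y + c₁ * X + c₂ * Z := by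
    rw [show (fun w => E w X Y Z) = fun w => w * (Y + c₁ * X + c₂ * Z) + c₂ * (X * Y) from
      funext fun t => by rw [hE]; ring, dlin]
  have d2 : deriv (fun x => E W x Y Z) X = c₁ * W + c₂ * Y := by
    rw [show (fun x => E W x Y Z) = fun x => x * (c₁ * W + c₂ * Y) + (W * Y + c₂ * (W * Z)) from
      funext fun t => by rw [hE]; ring, dlin]
  have d3 : deriv (fun y => E W X y Z) Y = W + c₂ * X := by
    rw [show (fun y => E W X y Z) = fun y => y * (W + c₂ * X) + (c₁ * (W * X) + c₂ * (W * Z)) from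
      funext fun t => by rw [hE]; ring, dlin]
  have d4 : deriv (fun z => E W X Y z) Z = c₂ * W := by
    rw [show (fun z => E W X Y z) = fun z => z * (c₂ * W) + (W * Y + c₁ * (W * X) + c₂ * (X * Y)) from
      funext fun t => by rw [hE]; ring, dlin]
  rw [d1, d2, d3, d4, hg n m, hg (n + 1) m, hg n (m + 1), hg (n + 1) (m + 1)]
  rw [show m + 1 - 1 = m from by ring, show m + 1 + 1 = m + 2 from by ring]
  have h1 := hu n (m - 1)
  rw [show m - 1 + 1 = m from by ring, hE] at h1
  have h2 := hu n m
  rw [hE] at h2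
  have h3 := hu n (m + 1)
  rw [show m + 1 + 1 = m + 2 from by ring, hE] at h3
  have := key_alg c₁ c₂ A B W X Y Z P Q hc2 (hne n (m - 1)) (hne (n + 1) (m - 1))
    (hne n m) (hne (n + 1) m) (hne n (m + 1)) h1 h2 h3
  linear_combination this
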